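/- Let ρ be a Lévy measure on (0,∞), α ∈ (1,2), and suppose C := sup_{s > 0, s ≤ 1} s^α ρ(s,∞) < ∞. Then for every ε ∈ (0,1] and r > 0 small enough, ∫₀^ε s² d(rρ(r^{1/α}·))(ds) ≤ 2C ∫₀^ε s^{1-α} ds = (2C/(2-α)) ε^{2-α}; in particular lim_{ε↓0} limsup_{r↓0} ∫_{0<s≤ε} s² r ρ(r^{1/α} ds) = 0. -/

import Mathlib

open MeasureTheory Filter

section auxx
open Set ENNReal

lemma aux_integral (α C b : ℝ) (hα2 : α < 2) (hC0 : 0 ≤ C) (hb : 0 < b) :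
    ∫⁻ t in Ioc (0:ℝ) b, ENNReal.ofReal (C * t ^ (-(α/2))) =
      ENNReal.ofReal (C / (1 - α/2) * b ^ (1 - α/2)) := by
  have hp : (-1:ℝ) < -(α/2) := by linarith
  have hint : IntervalIntegrable (fun t : ℝ => C * t ^ (-(α/2))) volume 0 b :=
    (intervalIntegral.intervalIntegrable_rpow' hp).const_mul C
  have hint' : IntegrableOn (fun t : ℝ => C * t ^ (-(α/2))) (Ioc 0 b) volume := by
    rw [← intervalIntegrable_iff_integrableOn_Ioc_of_le hb.le]; exact hint
  rw [← ofReal_integral_eq_lintegral_ofReal hint' ?_]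
  · congr 1
    rw [← intervalIntegral.integral_of_le hb.le]
    rw [intervalIntegral.integral_const_mul, integral_rpow (Or.inl hp)]
    rw [Real.zero_rpow (by linarith)]
    have : -(α/2) + 1 = 1 - α/2 := by ring
    rw [this]; field_simp; ring
  · filter_upwards [ae_restrict_mem measurableSet_Ioc] with t ht
    exact mul_nonneg hC0 (Real.rpow_nonneg ht.1.le _)

lemma key_bound (ρ : Measure ℝ) (α C : ℝ) (hα1 : 1 < α) (hα2 : α < 2) (hC0 : 0 ≤ C)
    (hfin : ∀ s ∈ Set.Ioc (0:ℝ) 1, ρ (Set.Ioi s) ≤ ENNReal.ofReal (C * s ^ (-α)))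
    {a : ℝ} (ha0 : 0 < a) (ha1 : a ≤ 1) :
    ∫⁻ s in Set.Ioc (0:ℝ) a, ENNReal.ofReal (s ^ 2) ∂ρ ≤
      ENNReal.ofReal (2 * C / (2 - α) * a ^ (2 - α)) := by
  have hmble : AEMeasurable (fun s : ℝ => s ^ 2) (ρ.restrict (Ioc 0 a)) :=
    (measurable_id.pow_const 2).aemeasurable
  rw [lintegral_eq_lintegral_meas_lt _ (Filter.Eventually.of_forall (fun s => sq_nonneg s)) hmble]
  have step1 : ∫⁻ t in Ioi (0:ℝ), ρ.restrict (Ioc 0 a) {s : ℝ | t < s ^ 2} ≤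
      ∫⁻ t in Ioi (0:ℝ), Set.indicator (Ioc (0:ℝ) (a^2))
        (fun t => ENNReal.ofReal (C * t ^ (-(α/2)))) t := by
    apply setLIntegral_mono' measurableSet_Ioi
    intro t ht
    simp only [mem_Ioi] at ht
    have hms : MeasurableSet {s : ℝ | t < s ^ 2} :=
      measurableSet_lt measurable_const (measurable_id.pow_const 2)
    rw [Measure.restrict_apply hms]
    by_cases hta : t ≤ a ^ 2
    · rw [Set.indicator_of_mem (show t ∈ Ioc (0:ℝ) (a^2) from ⟨ht, hta⟩)]
      have hsub : {s : ℝ | t < s ^ 2} ∩ Ioc 0 a ⊆ Ioi (Real.sqrt t) := by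
        intro s hs
        obtain ⟨hs1, hs2, hs3⟩ := hs
        exact (Real.sqrt_lt' hs2).2 hs1
      refine le_trans (measure_mono hsub) (le_trans (hfin _ ⟨Real.sqrt_pos.2 ht, ?_⟩) ?_)
      · calc Real.sqrt t ≤ Real.sqrt (a^2) := Real.sqrt_le_sqrt hta
          _ = a := Real.sqrt_sq ha0.le
          _ ≤ 1 := ha1
      · apply ENNReal.ofReal_le_ofReal
        have : Real.sqrt t ^ (-α) = t ^ (-(α/2)) := by
          rw [Real.sqrt_eq_rpow, ← Real.rpow_mul ht.le]
          ring_nf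
        rw [this]
    · rw [Set.indicator_of_notMem (fun h => hta h.2)]
      have : {s : ℝ | t < s ^ 2} ∩ Ioc 0 a = ∅ := by
        rw [Set.eq_empty_iff_forall_notMem]
        rintro s ⟨hs1, hs2, hs3⟩
        push_neg at hta
        have : s ^ 2 ≤ a ^ 2 := by nlinarith
        have hts : t < s ^ 2 := hs1
        linarith
      simp [this]
  refine le_trans step1 ?_
  rw [lintegral_indicator measurableSet_Ioc _, Measure.restrict_restrict measurableSet_Ioc]
  have hIoc : Ioc (0:ℝ) (a^2) ∩ Ioi 0 = Ioc 0 (a^2) := by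
    ext x; simp (config := {contextual := true}) [and_comm]
  rw [hIoc, aux_integral α C _ hα2 hC0 (by positivity)]
  apply ENNReal.ofReal_le_ofReal
  have h1 : (a^2 : ℝ) ^ (1 - α/2) = a ^ (2 - α) := by
    rw [← Real.rpow_natCast a 2, ← Real.rpow_mul ha0.le]
    norm_num; ring_nf
  rw [h1]
  have h2 : C / (1 - α/2) = 2 * C / (2 - α) := by
    rw [div_eq_div_iff (by linarith) (by linarith)]; ring
  rw [h2]

lemma tail_bound (ρ : Measure ℝ) (α C : ℝ) (hα1 : 1 < α)
    (hρlevy : ∫⁻ s, ENNReal.ofReal (min 1 (s ^ 2)) ∂ρ < ⊤) (hC0 : 0 ≤ C)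
    (hC : ∀ s ∈ Set.Ioc (0 : ℝ) 1, s ^ α * (ρ (Set.Ioi s)).toReal ≤ C) :
    ∀ s ∈ Set.Ioc (0:ℝ) 1, ρ (Set.Ioi s) ≤ ENNReal.ofReal (C * s ^ (-α)) := by
  intro s hs
  obtain ⟨hs0, hs1⟩ := hs
  have hmin : 0 < min 1 (s^2) := lt_min one_pos (pow_pos hs0 2)
  have hne : ρ (Ioi s) ≠ ⊤ := by
    intro htop
    have h1 : ∫⁻ t in Ioi s, ENNReal.ofReal (min 1 (s^2)) ∂ρ ≤
        ∫⁻ t in Ioi s, ENNReal.ofReal (min 1 (t^2)) ∂ρ := by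
      apply setLIntegral_mono' measurableSet_Ioi
      intro t ht
      apply ENNReal.ofReal_le_ofReal
      apply min_le_min le_rfl
      have : s < t := ht
      nlinarith
    rw [setLIntegral_const, htop, ENNReal.mul_top (ENNReal.ofReal_pos.2 hmin).ne'] at h1
    have h2 : ∫⁻ t in Ioi s, ENNReal.ofReal (min 1 (t^2)) ∂ρ ≤
        ∫⁻ t, ENNReal.ofReal (min 1 (t^2)) ∂ρ := setLIntegral_le_lintegral _ _
    exact absurd (le_trans h1 h2) (by simpa using hρlevy.ne)
  have hsα : (0:ℝ) < s ^ α := Real.rpow_pos_of_pos hs0 _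
  have htr : (ρ (Ioi s)).toReal ≤ C * s ^ (-α) := by
    have := hC s ⟨hs0, hs1⟩
    rw [Real.rpow_neg hs0.le, ← div_eq_mul_inv, le_div_iff₀ hsα, mul_comm]
    exact this
  calc ρ (Ioi s) = ENNReal.ofReal (ρ (Ioi s)).toReal := (ENNReal.ofReal_toReal hne).symm
    _ ≤ ENNReal.ofReal (C * s ^ (-α)) := ENNReal.ofReal_le_ofReal htr

end auxx

/-- Uniform small-jump second-moment bound for the rescaled Lévy measure
`r ρ(r^{1/α}·)` (pushforward of `rρ` under `s ↦ r^{-1/α}s`), and the resulting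
double limit `lim_{ε↓0} limsup_{r↓0} ∫_{0<s≤ε} s² rρ(r^{1/α}ds) = 0`. -/
theorem rescaled_levy_second_moment (ρ : Measure ℝ) (α : ℝ) (hα : α ∈ Set.Ioo (1 : ℝ) 2)
    (hρsupp : ρ (Set.Iic 0) = 0)
    (hρlevy : ∫⁻ s, ENNReal.ofReal (min 1 (s ^ 2)) ∂ρ < ⊤)
    (C : ℝ) (hC0 : 0 ≤ C)
    (hC : ∀ s ∈ Set.Ioc (0 : ℝ) 1, s ^ α * (ρ (Set.Ioi s)).toReal ≤ C) :
    (∀ ε ∈ Set.Ioc (0 : ℝ) 1, ∃ r₀ > (0 : ℝ), ∀ r ∈ Set.Ioo (0 : ℝ) r₀,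
        ∫⁻ s in Set.Ioc (0 : ℝ) ε, ENNReal.ofReal (s ^ 2)
            ∂(Measure.map (fun s : ℝ => r ^ (-(1 / α)) * s) (ENNReal.ofReal r • ρ)) ≤
          ENNReal.ofReal ((2 * C / (2 - α)) * ε ^ (2 - α))) ∧
      Tendsto (fun ε : ℝ =>
          Filter.limsup (fun r : ℝ =>
              ∫⁻ s in Set.Ioc (0 : ℝ) ε, ENNReal.ofReal (s ^ 2)
                ∂(Measure.map (fun s : ℝ => r ^ (-(1 / α)) * s) (ENNReal.ofReal r • ρ)))
            (nhdsWithin 0 (Set.Ioi 0)))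
        (nhdsWithin 0 (Set.Ioi 0)) (nhds 0) := by
  obtain ⟨hα1, hα2⟩ := hα
  have hα0 : (0:ℝ) < α := by linarith
  have hfin := tail_bound ρ α C hα1 hρlevy hC0 hC
  -- the main quantitative estimate
  have main : ∀ ε ∈ Set.Ioc (0 : ℝ) 1, ∀ r ∈ Set.Ioo (0 : ℝ) 1,
      ∫⁻ s in Set.Ioc (0 : ℝ) ε, ENNReal.ofReal (s ^ 2)
          ∂(Measure.map (fun s : ℝ => r ^ (-(1 / α)) * s) (ENNReal.ofReal r • ρ)) ≤
        ENNReal.ofReal ((2 * C / (2 - α)) * ε ^ (2 - α)) := by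
    intro ε hε r hr
    obtain ⟨hε0, hε1⟩ := hε
    obtain ⟨hr0, hr1⟩ := hr
    set c : ℝ := r ^ (-(1 / α)) with hc_def
    have hc : 0 < c := Real.rpow_pos_of_pos hr0 _
    set b : ℝ := ε * r ^ (1 / α) with hb_def
    have hrinv : 0 < r ^ (1 / α) := Real.rpow_pos_of_pos hr0 _
    have hb0 : 0 < b := mul_pos hε0 hrinv
    have hb1 : b ≤ 1 := by
      have : r ^ (1/α) ≤ 1 :=
        (Real.rpow_le_one hr0.le hr1.le (by positivity))
      calc b ≤ 1 * 1 := mul_le_mul hε1 this hrinv.le one_pos.le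
        _ = 1 := one_mul 1
    have hcinv : c⁻¹ = r ^ (1/α) := by
      rw [hc_def, ← Real.rpow_neg hr0.le, neg_neg]
    -- rewrite the integral
    have hmg : Measurable (fun s : ℝ => c * s) := measurable_const_mul c
    have hmf : Measurable (fun s : ℝ => ENNReal.ofReal (s ^ 2)) :=
      (measurable_id.pow_const 2).ennreal_ofReal
    rw [Measure.map_smul, Measure.restrict_smul, lintegral_smul_measure,
      setLIntegral_map measurableSet_Ioc hmf hmg]
    have hpre : (fun s : ℝ => c * s) ⁻¹' Set.Ioc 0 ε = Set.Ioc 0 b := by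
      ext x
      simp only [Set.mem_preimage, Set.mem_Ioc]
      constructor
      · rintro ⟨h1, h2⟩
        have hx : 0 < x := by nlinarith
        refine ⟨hx, ?_⟩
        rw [hb_def, ← hcinv]
        calc x = c⁻¹ * (c * x) := by field_simp
          _ ≤ c⁻¹ * ε := by
              apply mul_le_mul_of_nonneg_left h2 (inv_nonneg.2 hc.le)
          _ = ε * c⁻¹ := mul_comm _ _
      · rintro ⟨h1, h2⟩
        refine ⟨mul_pos hc h1, ?_⟩
        rw [hb_def, ← hcinv] at h2
        calc c * x ≤ c * (ε * c⁻¹) := mul_le_mul_of_nonneg_left h2 hc.le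
          _ = ε := by field_simp
    rw [hpre]
    have hpt : ∀ x ∈ Set.Ioc (0:ℝ) b, ENNReal.ofReal ((c * x) ^ 2) =
        ENNReal.ofReal (c ^ 2) * ENNReal.ofReal (x ^ 2) := by
      intro x hx
      rw [mul_pow, ENNReal.ofReal_mul (by positivity)]
    rw [setLIntegral_congr_fun measurableSet_Ioc hpt,
      lintegral_const_mul _ hmf]
    have hkey := key_bound ρ α C hα1 hα2 hC0 hfin hb0 hb1
    calc ENNReal.ofReal r * (ENNReal.ofReal (c ^ 2) *
            ∫⁻ s in Set.Ioc (0:ℝ) b, ENNReal.ofReal (s ^ 2) ∂ρ)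
        ≤ ENNReal.ofReal r * (ENNReal.ofReal (c ^ 2) *
            ENNReal.ofReal (2 * C / (2 - α) * b ^ (2 - α))) := by
          gcongr
      _ = ENNReal.ofReal (r * (c ^ 2 * (2 * C / (2 - α) * b ^ (2 - α)))) := by
          rw [← ENNReal.ofReal_mul (sq_nonneg c), ← ENNReal.ofReal_mul hr0.le]
      _ = ENNReal.ofReal ((2 * C / (2 - α)) * ε ^ (2 - α)) := by
          congr 1
          have hexp : r ^ (1:ℝ) * r ^ (-(1/α) * 2) * r ^ ((1/α) * (2-α)) = 1 := by
            rw [← Real.rpow_add hr0, ← Real.rpow_add hr0,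
              show (1:ℝ) + -(1/α)*2 + (1/α)*(2-α) = 0 by field_simp; ring,
              Real.rpow_zero]
          have hc2 : c ^ 2 = r ^ (-(1/α) * (2:ℝ)) := by
            rw [hc_def, ← Real.rpow_natCast (r ^ (-(1/α))) 2, ← Real.rpow_mul hr0.le]
            norm_num
          have hbpow : b ^ (2-α) = ε ^ (2-α) * r ^ ((1/α) * (2-α)) := by
            rw [hb_def, Real.mul_rpow hε0.le hrinv.le, ← Real.rpow_mul hr0.le]
          rw [hc2, hbpow]
          calc r * (r ^ (-(1/α) * (2:ℝ)) * (2 * C / (2 - α) *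
                  (ε ^ (2-α) * r ^ ((1/α) * (2-α)))))
              = (r ^ (1:ℝ) * r ^ (-(1/α) * 2) * r ^ ((1/α) * (2-α))) *
                (2 * C / (2 - α) * ε ^ (2-α)) := by
                rw [Real.rpow_one]; ring
            _ = 2 * C / (2 - α) * ε ^ (2-α) := by rw [hexp, one_mul]
  constructor
  · intro ε hε
    exact ⟨1, one_pos, main ε hε⟩
  · -- limsup bound and squeeze
    set F := fun ε : ℝ =>
        Filter.limsup (fun r : ℝ =>
            ∫⁻ s in Set.Ioc (0 : ℝ) ε, ENNReal.ofReal (s ^ 2)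
              ∂(Measure.map (fun s : ℝ => r ^ (-(1 / α)) * s) (ENNReal.ofReal r • ρ)))
          (nhdsWithin 0 (Set.Ioi 0)) with hF
    have hFle : ∀ ε ∈ Set.Ioc (0:ℝ) 1,
        F ε ≤ ENNReal.ofReal ((2 * C / (2 - α)) * ε ^ (2 - α)) := by
      intro ε hε
      refine limsup_le_of_le (by isBoundedDefault) ?_
      filter_upwards [Ioo_mem_nhdsGT_of_mem (by norm_num : (0:ℝ) ∈ Set.Ico (0:ℝ) 1)] with r hr
      exact main ε hε r hr
    have hupper : Tendsto (fun ε : ℝ => ENNReal.ofReal ((2 * C / (2 - α)) * ε ^ (2 - α)))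
        (nhdsWithin 0 (Set.Ioi 0)) (nhds 0) := by
      have h1 : Tendsto (fun ε : ℝ => ε ^ (2 - α)) (nhds 0) (nhds 0) := by
        have := (Real.continuousAt_rpow_const 0 (2 - α) (Or.inr (by linarith)))
        simpa [Real.zero_rpow (show (2:ℝ) - α ≠ 0 by linarith)] using this.tendsto
      have h2 : Tendsto (fun ε : ℝ => (2 * C / (2 - α)) * ε ^ (2 - α)) (nhds 0) (nhds 0) := by
        simpa using h1.const_mul (2 * C / (2 - α))
      have h3 := ENNReal.tendsto_ofReal h2
      simpa using h3.mono_left nhdsWithin_le_nhds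
    apply tendsto_of_tendsto_of_tendsto_of_le_of_le' tendsto_const_nhds hupper
    · exact Filter.Eventually.of_forall (fun ε => zero_le)
    · filter_upwards [Ioc_mem_nhdsGT_of_mem
        (by norm_num : (0:ℝ) ∈ Set.Ico (0:ℝ) 1)] with ε hε
      exact hFle ε hε
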